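/- With b_n and B_n as above, for every n ≥ 1 the identity B_n(x) + b_n/(6x+1) = −(B_n(x) + b_n/(6x−1)) + (12(x+n)(x−1)(6x−7)/((x+n−1)(6x+1)(6x−1)))·(B_n(x−1) + b_n/(6x−7)) + 18(6n+1)·(2(x+n)/(x+n−1))·(B_{n−1}(x) + b_{n−1}/(6x+1)) holds in ℚ(x). -/

import Mathlib

open Polynomial

/-- The odd double factorial: `oddFac k = (2k+1)!! = 1·3·5···(2k+1)`. -/
def oddFac (k : ℕ) : ℕ := ∏ i ∈ Finset.range (k+1), (2*i+1)

/-- `bSeq n = 2^n·(6n+1)!!/(2n)!` as a rational number. -/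
def bSeq (n : ℕ) : ℚ := 2^n * oddFac (3*n) / (2*n).factorial

/-- The falling factorial `(p)_{[j]} = p(p-1)···(p-j+1)` of a polynomial `p`, with
`(p)_{[0]} = 1`. -/
noncomputable def ff (p : Polynomial ℚ) (j : ℕ) : Polynomial ℚ :=
  ∏ i ∈ Finset.range j, (p - Polynomial.C (i : ℚ))

/-- The polynomial `B_n(x) = (1/6)·Σ_{j=1}^{n} 108^j·b_{n−j}·(x+n)_{[j−1]}`. -/
noncomputable def Bpoly (n : ℕ) : Polynomial ℚ :=
  Polynomial.C (1/6 : ℚ) *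
    ∑ j ∈ Finset.Icc 1 n,
      Polynomial.C ((108:ℚ)^j * bSeq (n-j)) * ff (Polynomial.X + Polynomial.C (n:ℚ)) (j-1)

set_option maxHeartbeats 2000000
set_option maxRecDepth 10000

lemma oddFac_succ (k : ℕ) : oddFac (k+1) = oddFac k * (2*(k+1)+1) := by
  rw [oddFac, Finset.prod_range_succ]; rfl

lemma bSeq_rec (n : ℕ) :
    ((n:ℚ)+1) * bSeq (n+1) = 3*(6*(n:ℚ)+7)*(6*(n:ℚ)+5)*bSeq n := by
  have h1 : oddFac (3*(n+1))
      = oddFac (3*n) * (2*(3*n+1)+1) * (2*(3*n+2)+1) * (2*(3*n+3)+1) := by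
    have e : 3*(n+1) = (3*n+2)+1 := by ring
    rw [e, oddFac_succ, show 3*n+2 = (3*n+1)+1 from rfl, oddFac_succ,
       show 3*n+1 = (3*n)+1 from rfl, oddFac_succ]
  have h2 : (2*(n+1)).factorial = (2*n+2) * ((2*n+1) * (2*n).factorial) := by
    have e : 2*(n+1) = (2*n+1)+1 := by ring
    rw [e, Nat.factorial_succ, Nat.factorial_succ]
  have hf : ((2*n).factorial : ℚ) ≠ 0 := by
    exact_mod_cast Nat.factorial_ne_zero _
  simp only [bSeq, h1, h2]
  push_cast
  field_simp
  ring

noncomputable def Spoly (n : ℕ) : Polynomial ℚ :=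
  ∑ j ∈ Finset.Icc 1 n, Polynomial.C ((108:ℚ)^j * bSeq (n-j)) * ff Polynomial.X (j-1)

lemma ff_comp (q : Polynomial ℚ) (j : ℕ) : (ff X j).comp q = ff q j := by
  simp [ff, Polynomial.prod_comp]

lemma ff_succ (k : ℕ) : ff X (k+1) = X * ff (X - 1) k := by
  unfold ff
  rw [Finset.prod_range_succ', mul_comm]
  have hc : ∀ i ∈ Finset.range k, (X - C ((i+1:ℕ):ℚ)) = (X - 1 - C (i:ℚ)) := by
    intro i _
    rw [Nat.cast_add, Nat.cast_one, map_add, map_one]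
    ring
  rw [Finset.prod_congr rfl hc]
  simp

lemma Icc_sum (f : ℕ → Polynomial ℚ) (n : ℕ) :
    ∑ j ∈ Finset.Icc 1 n, f j = ∑ i ∈ Finset.range n, f (1+i) := by
  rw [← Finset.Ico_add_one_right_eq_Icc, Finset.sum_Ico_eq_sum_range]
  simp

lemma Spoly_rec (n : ℕ) :
    Spoly (n+1) = 108 * C (bSeq n) + 108 * X * (Spoly n).comp (X - 1) := by
  rw [Spoly, Icc_sum, Finset.sum_range_succ']
  have h0 : C ((108:ℚ)^(1+0) * bSeq (n + 1 - (1+0))) * ff X (1+0-1) = 108 * C (bSeq n) := by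
    rw [show ((108:ℚ[X])) = C (108:ℚ) from (map_ofNat C 108).symm, ← map_mul]
    norm_num [ff]
  rw [h0, Spoly, Icc_sum, sum_comp, Finset.mul_sum, add_comm]
  congr 1
  refine Finset.sum_congr rfl fun i _ => ?_
  rw [mul_comp, C_comp, ff_comp, show 1+(i+1)-1 = (1+i-1)+1 from by omega,
    show 1+i-1 = i from by omega, ff_succ,
    show n+1-(1+(i+1)) = n-(1+i) from by omega,
    show (108:ℚ)^(1+(i+1)) = 108 * (108:ℚ)^(1+i) from by ring,
    show ((108:ℚ[X])) = C (108:ℚ) from (map_ofNat C 108).symm]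
  simp only [map_mul]
  ring

lemma key (n : ℕ) :
    (6*X - (6*(n:ℚ[X])-1)) * (6*X - (6*(n:ℚ[X])+1)) * Spoly n
      - 36*(X - ((n:ℚ[X])+1)) * X * (Spoly n).comp (X - 1)
    = 36*(n:ℚ[X]) * C (bSeq n) := by
  induction n with
  | zero => simp [Spoly]
  | succ n ih =>
    have h := congrArg (fun p => p.comp (X - 1)) ih
    simp only [sub_comp, mul_comp, add_comp, X_comp, C_comp, natCast_comp, ofNat_comp,
      one_comp] at h
    have hb := congrArg C (bSeq_rec n)
    simp only [map_mul, map_add, map_ofNat, map_one, C_eq_natCast] at hb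
    rw [Spoly_rec n]
    simp only [add_comp, mul_comp, C_comp, X_comp, ofNat_comp]
    push_cast
    linear_combination (108 * X) * h - 36 * hb

lemma hB (n : ℕ) : 6 * Bpoly n = (Spoly n).comp (X + (n : ℚ[X])) := by
  have h6 : (6:ℚ[X]) * C (1/6 : ℚ) = 1 := by
    rw [show ((6:ℚ[X])) = C (6:ℚ) from (map_ofNat C 6).symm, ← map_mul]
    norm_num
  rw [Bpoly, Spoly, sum_comp, ← mul_assoc, h6, one_mul]
  refine Finset.sum_congr rfl fun j _ => ?_
  rw [mul_comp, C_comp, ff_comp, C_eq_natCast]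

lemma hBd (n : ℕ) : 6 * (Bpoly n).comp (X - 1) = (Spoly n).comp (X + (n:ℚ[X]) - 1) := by
  have h := congrArg (fun p => p.comp (X - 1)) (hB n)
  simp only [mul_comp, ofNat_comp, Polynomial.comp_assoc, add_comp, X_comp, natCast_comp] at h
  rw [show X - 1 + (n:ℚ[X]) = X + (n:ℚ[X]) - 1 from by ring] at h
  linear_combination h

lemma K1 (n : ℕ) :
    (6*X+1)*(6*X-1)*(6 * Bpoly n) - 36*(X-1)*(X+(n:ℚ[X]))*(6 * (Bpoly n).comp (X - 1))
      = 36*(n:ℚ[X]) * C (bSeq n) := by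
  have h := congrArg (fun p => p.comp (X + (n:ℚ[X]))) (key n)
  simp only [sub_comp, mul_comp, add_comp, X_comp, C_comp, natCast_comp, ofNat_comp,
    one_comp, Polynomial.comp_assoc] at h
  linear_combination h + (6*X+1)*(6*X-1) * (hB n) - 36*(X-1)*(X+(n:ℚ[X])) * (hBd n)

lemma K2 (m : ℕ) :
    6 * Bpoly (m+1) = 108 * C (bSeq m) + 108 * (X + ((m:ℚ[X])+1)) * (6 * Bpoly m) := by
  have h1 := hB (m+1)
  rw [Spoly_rec m] at h1
  simp only [add_comp, mul_comp, C_comp, X_comp, ofNat_comp, Polynomial.comp_assoc,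
    sub_comp, one_comp] at h1
  push_cast at h1
  rw [show X + ((m:ℚ[X]) + 1) - 1 = X + (m:ℚ[X]) from by ring] at h1
  linear_combination h1 - 108*(X+((m:ℚ[X])+1)) * (hB m)

noncomputable section

/-- The image of `B_n` in the field of rational functions `ℚ(x)`. -/
def Bf (n : ℕ) : RatFunc ℚ := algebraMap (Polynomial ℚ) (RatFunc ℚ) (Bpoly n)

/-- The image of `B_n(x+1)` in `ℚ(x)`. -/
def BfShiftUp (n : ℕ) : RatFunc ℚ :=
  algebraMap (Polynomial ℚ) (RatFunc ℚ) ((Bpoly n).comp (Polynomial.X + 1))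

/-- The image of `B_n(x-1)` in `ℚ(x)`. -/
def BfShiftDown (n : ℕ) : RatFunc ℚ :=
  algebraMap (Polynomial ℚ) (RatFunc ℚ) ((Bpoly n).comp (Polynomial.X - 1))

/-- The generator `x` of `ℚ(x)`. -/
def Xr : RatFunc ℚ := RatFunc.X

/-- Constant rational functions. -/
def cst (a : ℚ) : RatFunc ℚ := RatFunc.C a

end

/-- The identity in `ℚ(x)`, for `n ≥ 1`:
`B_n(x) + b_n/(6x+1) = −(B_n(x) + b_n/(6x−1))
 + (12(x+n)(x−1)(6x−7)/((x+n−1)(6x+1)(6x−1)))·(B_n(x−1) + b_n/(6x−7))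
 + 18(6n+1)·(2(x+n)/(x+n−1))·(B_{n−1}(x) + b_{n−1}/(6x+1))`. -/
theorem stmt6 (n : ℕ) (hn : 1 ≤ n) :
    Bf n + cst (bSeq n) / (6*Xr+1)
      = -(Bf n + cst (bSeq n) / (6*Xr-1))
        + (12 * (Xr + (n : RatFunc ℚ)) * (Xr - 1) * (6*Xr-7)
            / ((Xr + (n : RatFunc ℚ) - 1) * (6*Xr+1) * (6*Xr-1)))
          * (BfShiftDown n + cst (bSeq n) / (6*Xr-7))
        + 18 * (6*(n : RatFunc ℚ) + 1) * (2 * (Xr + (n : RatFunc ℚ)) / (Xr + (n : RatFunc ℚ) - 1))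
          * (Bf (n-1) + cst (bSeq (n-1)) / (6*Xr+1)) := by
  obtain ⟨m, rfl⟩ : ∃ m, n = m + 1 := ⟨n-1, (Nat.succ_pred_eq_of_pos hn).symm⟩
  have hK1 := congrArg (algebraMap (Polynomial ℚ) (RatFunc ℚ)) (K1 (m+1))
  have hK2 := congrArg (algebraMap (Polynomial ℚ) (RatFunc ℚ)) (K2 m)
  have hK3 := congrArg (RatFunc.C (K := ℚ)) (bSeq_rec m)
  simp only [map_mul, map_add, map_sub, map_ofNat, map_natCast, map_one,
    RatFunc.algebraMap_X, RatFunc.algebraMap_C] at hK1 hK2 hK3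
  have hnz : ∀ p : Polynomial ℚ, p ≠ 0 →
      algebraMap (Polynomial ℚ) (RatFunc ℚ) p ≠ 0 :=
    fun p hp => RatFunc.algebraMap_ne_zero hp
  have h1 : (6*RatFunc.X+1 : RatFunc ℚ) ≠ 0 := by
    have e : (6*RatFunc.X+1 : RatFunc ℚ)
        = algebraMap (Polynomial ℚ) (RatFunc ℚ) (6*X+1) := by
      simp [map_add, map_mul, map_ofNat, map_one, RatFunc.algebraMap_X]
    rw [e]
    refine hnz _ fun h => ?_
    simpa using congrArg (Polynomial.eval 0) h
  have h2 : (6*RatFunc.X-1 : RatFunc ℚ) ≠ 0 := by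
    have e : (6*RatFunc.X-1 : RatFunc ℚ)
        = algebraMap (Polynomial ℚ) (RatFunc ℚ) (6*X-1) := by
      simp [map_sub, map_mul, map_ofNat, map_one, RatFunc.algebraMap_X]
    rw [e]
    refine hnz _ fun h => ?_
    simpa using congrArg (Polynomial.eval 0) h
  have h7 : (6*RatFunc.X-7 : RatFunc ℚ) ≠ 0 := by
    have e : (6*RatFunc.X-7 : RatFunc ℚ)
        = algebraMap (Polynomial ℚ) (RatFunc ℚ) (6*X-7) := by
      simp [map_sub, map_mul, map_ofNat, RatFunc.algebraMap_X]
    rw [e]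
    refine hnz _ fun h => ?_
    simpa using congrArg (Polynomial.eval 0) h
  have hm1 : (RatFunc.X + ((m:RatFunc ℚ)+1) - 1 : RatFunc ℚ) ≠ 0 := by
    have e : (RatFunc.X + ((m:RatFunc ℚ)+1) - 1 : RatFunc ℚ)
        = algebraMap (Polynomial ℚ) (RatFunc ℚ) (X + ((m:ℚ[X])+1) - 1) := by
      simp [map_sub, map_add, map_natCast, map_one, RatFunc.algebraMap_X]
    rw [e]
    refine hnz _ fun h => ?_
    have h' := congrArg (Polynomial.eval 1) h
    simp at h'
    exact Nat.cast_add_one_ne_zero m h'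
  simp only [Bf, BfShiftDown, cst, Xr, Nat.add_sub_cancel]
  push_cast at hK1 hK2 hK3 ⊢
  have hCC : ∀ q : ℚ, RatFunc.C q = (q : RatFunc ℚ) := fun q => by simp
  simp only [hCC] at hK1 hK2 hK3 ⊢
  field_simp [h1, h2, h7, hm1]
  have hQ := mul_ne_zero h2 (mul_ne_zero (mul_ne_zero (mul_ne_zero hm1 h1) h2) h7)
  have h18 : (18 : RatFunc ℚ) ≠ 0 := by
    have h' : ((18:ℚ[X])) ≠ 0 := by norm_num
    have := hnz 18 h'
    simpa [map_ofNat] using this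
  apply mul_left_cancel₀ h18
  linear_combination (norm := ring1)
    ( ((6*RatFunc.X-7)) * hK1
      + ((6*((m:RatFunc ℚ)+1)+1)*(6*RatFunc.X+1)*(6*RatFunc.X-1)) * hK2
      + (36*(6*RatFunc.X-1)) * hK3 )
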